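/- Let C be an N×N matrix over the tropical (min-plus) semifield 𝕋 = ℚ ∪ {+∞}, with C ≠ (+∞) in the 1×1 case, i.e. C has at least one finite entry, and suppose C is irreducible (its adjacency digraph is strongly connected). Then there exists a rational number Λ and a vector V ∈ ℚ^N such that min_j (C_{ij} + V_j) = Λ + V_i for every i. -/

import Mathlib

namespace TropAux

variable {M : ℕ}

/-- min-plus matrix power: `Pm C n i j` = min weight of a walk from `j` to `i` of length `n`. -/
def Pm (C : Matrix (Fin (M+1)) (Fin (M+1)) (WithTop ℚ)) : ℕ → Fin (M+1) → Fin (M+1) → WithTop ℚ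
  | 0 => fun i j => if i = j then 0 else ⊤
  | (n+1) => fun i j => Finset.univ.inf' Finset.univ_nonempty (fun k => C i k + Pm C n k j)

variable {C : Matrix (Fin (M+1)) (Fin (M+1)) (WithTop ℚ)}

lemma Pm_succ_le (n : ℕ) (i j k : Fin (M+1)) :
    Pm C (n+1) i j ≤ C i k + Pm C n k j :=
  Finset.inf'_le _ (Finset.mem_univ k)

lemma Pm_succ_exists (n : ℕ) (i j : Fin (M+1)) :
    ∃ k, Pm C (n+1) i j = C i k + Pm C n k j := by
  obtain ⟨k, _, hk⟩ := Finset.exists_mem_eq_inf' (Finset.univ_nonempty)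
    (fun k => C i k + Pm C n k j)
  exact ⟨k, hk⟩

lemma Pm_zero_self (i : Fin (M+1)) : Pm C 0 i i = 0 := by simp [Pm]

lemma Pm_zero_ne_top {i j : Fin (M+1)} (h : Pm C 0 i j ≠ ⊤) : i = j := by
  by_contra hij; simp [Pm, hij] at h

/-- lower bound: `Pm` is below the weight of any walk. -/
lemma Pm_le_walk (w : ℕ → Fin (M+1)) (n : ℕ) :
    Pm C n (w n) (w 0) ≤ ∑ t ∈ Finset.range n, C (w (t+1)) (w t) := by
  induction n with
  | zero => simp [Pm]
  | succ n ih =>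
      rw [Finset.sum_range_succ]
      refine le_trans (Pm_succ_le n _ _ (w n)) ?_
      rw [add_comm (∑ t ∈ Finset.range n, C (w (t+1)) (w t))]
      exact add_le_add_right ih _

/-- extraction of a minimizing walk. -/
lemma Pm_walk {M : ℕ} {C : Matrix (Fin (M+1)) (Fin (M+1)) (WithTop ℚ)} :
    ∀ (n : ℕ) (i j : Fin (M+1)), Pm C n i j ≠ ⊤ →
    ∃ w : ℕ → Fin (M+1), w 0 = j ∧ w n = i ∧
      (∀ t < n, Pm C (t+1) (w (t+1)) j = C (w (t+1)) (w t) + Pm C t (w t) j) ∧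
      (∀ t ≤ n, Pm C t (w t) j ≠ ⊤)
  | 0, i, j, h => by
      have hij : i = j := Pm_zero_ne_top h
      refine ⟨fun _ => j, rfl, hij.symm, by omega, ?_⟩
      intro t ht
      interval_cases t
      simp [Pm]
  | (n+1), i, j, h => by
      obtain ⟨k, hk⟩ := Pm_succ_exists (C := C) n i j
      have h1 : C i k ≠ ⊤ ∧ Pm C n k j ≠ ⊤ := by
        rw [hk] at h
        exact ⟨fun ht => h (by simp [ht]), fun ht => h (by simp [ht])⟩
      obtain ⟨w, hw0, hwn, hstep, hfin⟩ := Pm_walk n k j h1.2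
      refine ⟨fun t => if t ≤ n then w t else i, by simp [hw0], by simp, ?_, ?_⟩
      · intro t ht
        rcases Nat.lt_or_ge t n with ht' | ht'
        · simpa [Nat.le_of_lt ht', Nat.succ_le_of_lt ht'] using hstep t ht'
        · have htn : t = n := by omega
          subst htn
          simpa [hwn] using hk
      · intro t ht
        rcases le_or_gt t n with ht' | ht'
        · simpa [ht'] using hfin t ht'
        · have : t = n + 1 := by omega
          subst this
          simpa [Nat.lt_irrefl] using h

/-- telescoping along a minimizing walk. -/
lemma Pm_tel {M : ℕ} {C : Matrix (Fin (M+1)) (Fin (M+1)) (WithTop ℚ)}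
    {w : ℕ → Fin (M+1)} {j : Fin (M+1)} {n : ℕ}
    (hstep : ∀ t < n, Pm C (t+1) (w (t+1)) j = C (w (t+1)) (w t) + Pm C t (w t) j)
    (a : ℕ) : ∀ b, a ≤ b → b ≤ n →
      Pm C b (w b) j = Pm C a (w a) j + ∑ t ∈ Finset.Ico a b, C (w (t+1)) (w t) := by
  intro b
  induction b with
  | zero => intro h1 _; interval_cases a; simp
  | succ b ih =>
      intro h1 h2
      rcases le_or_gt a b with hab | hab
      · rw [hstep b (by omega), ih hab (by omega),
          Finset.sum_Ico_succ_top hab]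
        rw [add_comm (C (w (b+1)) (w b)), add_assoc]
      · have : a = b + 1 := by omega
        subst this; simp


lemma sum_ne_top {n : ℕ} {f : ℕ → WithTop ℚ} (h : ∀ t < n, f t ≠ ⊤) :
    ∑ t ∈ Finset.range n, f t ≠ ⊤ := by
  induction n with
  | zero => simp
  | succ n ih =>
      rw [Finset.sum_range_succ]
      exact WithTop.add_ne_top.mpr ⟨ih (fun t ht => h t (by omega)), h n (by omega)⟩

lemma add_ne_top_left {x y : WithTop ℚ} (h : x + y ≠ ⊤) : x ≠ ⊤ :=
  fun hx => h (by simp [hx])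

lemma add_ne_top_right {x y : WithTop ℚ} (h : x + y ≠ ⊤) : y ≠ ⊤ :=
  fun hy => h (by simp [hy])

variable {M : ℕ} {C : Matrix (Fin (M+1)) (Fin (M+1)) (WithTop ℚ)}

lemma reach_walk {i j : Fin (M+1)}
    (h : Relation.ReflTransGen (fun a b => C b a ≠ ⊤) j i) :
    ∃ n, ∃ w : ℕ → Fin (M+1), w 0 = j ∧ w n = i ∧ ∀ t < n, C (w (t+1)) (w t) ≠ ⊤ := by
  induction h with
  | refl => exact ⟨0, fun _ => j, rfl, rfl, by omega⟩
  | @tail b c hjb hbc ih =>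
      obtain ⟨n, w, hw0, hwn, harc⟩ := ih
      refine ⟨n+1, fun t => if t ≤ n then w t else c, by simp [hw0], by simp, ?_⟩
      intro t ht
      rcases lt_or_ge t n with ht' | ht'
      · simpa [Nat.le_of_lt ht', Nat.succ_le_of_lt ht'] using harc t ht'
      · have : t = n := by omega
        subst this
        simpa [hwn] using hbc

lemma walk_ge1 (hfin : ∃ i j, C i j ≠ ⊤)
    (hirr : ∀ a b : Fin (M+1), Relation.ReflTransGen (fun a b => C b a ≠ ⊤) a b)
    (i j : Fin (M+1)) :
    ∃ n, 1 ≤ n ∧ ∃ w : ℕ → Fin (M+1), w 0 = j ∧ w n = i ∧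
      ∀ t < n, C (w (t+1)) (w t) ≠ ⊤ := by
  obtain ⟨i₀, j₀, harc⟩ := hfin
  obtain ⟨n₁, w₁, h10, h1n, h1a⟩ := reach_walk (hirr j j₀)
  obtain ⟨n₂, w₂, h20, h2n, h2a⟩ := reach_walk (hirr i₀ i)
  refine ⟨n₁ + 1 + n₂, by omega,
    fun t => if t ≤ n₁ then w₁ t else w₂ (t - (n₁+1)), by simp [h10], ?_, ?_⟩
  · have : ¬ (n₁ + 1 + n₂ ≤ n₁) := by omega
    simp only [this, if_false]
    have : n₁ + 1 + n₂ - (n₁ + 1) = n₂ := by omega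
    rw [this, h2n]
  · intro t ht
    rcases lt_or_ge t n₁ with h | h
    · simpa [Nat.le_of_lt h, Nat.succ_le_of_lt h] using h1a t h
    rcases eq_or_lt_of_le h with h' | h'
    · subst h'
      have h3 : ¬ (n₁ + 1 ≤ n₁) := by omega
      have e : n₁ + 1 - (n₁ + 1) = 0 := by omega
      simp only [le_refl, if_true, h3, if_false, e, h1n, h20]
      exact harc
    · have e1 : ¬ (t ≤ n₁) := by omega
      have e2 : ¬ (t + 1 ≤ n₁) := by omega
      simp only [e1, e2, if_false]
      have e3 : t + 1 - (n₁ + 1) = (t - (n₁+1)) + 1 := by omega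
      rw [e3]
      exact h2a _ (by omega)

lemma Pm_ne_top (hfin : ∃ i j, C i j ≠ ⊤)
    (hirr : ∀ a b : Fin (M+1), Relation.ReflTransGen (fun a b => C b a ≠ ⊤) a b)
    (i j : Fin (M+1)) : ∃ n, 1 ≤ n ∧ Pm C n i j ≠ ⊤ := by
  obtain ⟨n, hn, w, hw0, hwn, harc⟩ := walk_ge1 hfin hirr i j
  refine ⟨n, hn, ?_⟩
  intro htop
  have hle := Pm_le_walk (C := C) w n
  rw [hw0, hwn, htop] at hle
  exact sum_ne_top (f := fun t => C (w (t+1)) (w t)) harc (top_le_iff.mp hle)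


variable {M : ℕ} {C : Matrix (Fin (M+1)) (Fin (M+1)) (WithTop ℚ)}

lemma Pm_split (n : ℕ) (i j : Fin (M+1)) (hn : M + 2 ≤ n) (h : Pm C n i j ≠ ⊤) :
    ∃ c k, 1 ≤ c ∧ c ≤ M + 1 ∧ Pm C c k k ≠ ⊤ ∧
      Pm C (n-c) i j + Pm C c k k ≤ Pm C n i j := by
  obtain ⟨w, hw0, hwn, hstep, hfin⟩ := Pm_walk n i j h
  -- pigeonhole on positions 0..M+1
  obtain ⟨x, y, hxy, hgxy⟩ := Fintype.exists_ne_map_eq_of_card_lt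
    (fun t : Fin (M+2) => w t) (by simp)
  -- order them
  obtain ⟨a, b, hab, hbM, hwab⟩ :
      ∃ a b : ℕ, a < b ∧ b ≤ M + 1 ∧ w a = w b := by
    rcases lt_or_gt_of_ne hxy with hlt | hlt
    · exact ⟨x, y, hlt, by omega, hgxy⟩
    · exact ⟨y, x, hlt, by omega, hgxy.symm⟩
  set c := b - a with hc
  have hc1 : 1 ≤ c := by omega
  have hcM : c ≤ M + 1 := by omega
  have hbn : b < n := by omega
  -- total weight
  have htot : Pm C n i j = ∑ t ∈ Finset.Ico 0 n, C (w (t+1)) (w t) := by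
    have := Pm_tel hstep 0 n (by omega) le_rfl
    rw [hwn] at this
    rw [this, hw0, Pm_zero_self, zero_add]
  -- decompose the sum
  have hsplit1 : ∑ t ∈ Finset.Ico 0 n, C (w (t+1)) (w t) =
      (∑ t ∈ Finset.Ico 0 a, C (w (t+1)) (w t)) + (∑ t ∈ Finset.Ico a b, C (w (t+1)) (w t))
        + (∑ t ∈ Finset.Ico b n, C (w (t+1)) (w t)) := by
    rw [Finset.sum_Ico_consecutive _ (by omega : (0:ℕ) ≤ a) (by omega : a ≤ b),
      Finset.sum_Ico_consecutive _ (by omega : (0:ℕ) ≤ b) (by omega : b ≤ n)]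
  -- middle is a closed walk at w a
  have hmid : Pm C c (w a) (w a) ≤ ∑ t ∈ Finset.Ico a b, C (w (t+1)) (w t) := by
    have hle := Pm_le_walk (C := C) (fun t => w (a + t)) c
    have e1 : a + c = b := by omega
    simp only [add_zero, e1] at hle
    rw [Finset.sum_Ico_eq_sum_range]
    have e2 : b - a = c := rfl
    rw [e2]
    calc Pm C c (w a) (w a) = Pm C c (w b) (w a) := by rw [hwab]
    _ ≤ ∑ t ∈ Finset.range c, C (w (a + (t+1))) (w (a + t)) := hle
    _ = ∑ t ∈ Finset.range c, C (w (a + t + 1)) (w (a + t)) := by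
        apply Finset.sum_congr rfl; intro t _; ring_nf
  -- outer walk: skip the cycle
  have houter : Pm C (n - c) i j ≤
      (∑ t ∈ Finset.Ico 0 a, C (w (t+1)) (w t)) + (∑ t ∈ Finset.Ico b n, C (w (t+1)) (w t)) := by
    set w' : ℕ → Fin (M+1) := fun t => if t ≤ a then w t else w (t + c) with hw'
    have hle := Pm_le_walk (C := C) w' (n - c)
    have e0 : w' 0 = j := by simp [hw', hw0]
    have en : w' (n - c) = i := by
      have h1 : ¬ (n - c ≤ a) := by omega
      have h2 : n - c + c = n := by omega
      simp [hw', h1, h2, hwn]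
    rw [e0, en] at hle
    refine hle.trans (le_of_eq ?_)
    have hsplit2 : ∑ t ∈ Finset.range (n - c), C (w' (t+1)) (w' t) =
        (∑ t ∈ Finset.Ico 0 a, C (w' (t+1)) (w' t)) + (∑ t ∈ Finset.Ico a (n-c), C (w' (t+1)) (w' t)) := by
      rw [Finset.range_eq_Ico,
        ← Finset.sum_Ico_consecutive _ (by omega : (0:ℕ) ≤ a) (by omega : a ≤ n - c)]
    rw [hsplit2]
    congr 1
    · apply Finset.sum_congr rfl
      intro t ht
      simp only [Finset.mem_Ico] at ht
      have h1 : t ≤ a := by omega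
      have h2 : t + 1 ≤ a := by omega
      simp [hw', h1, h2]
    · rw [Finset.sum_Ico_eq_sum_range, Finset.sum_Ico_eq_sum_range]
      have e3 : n - c - a = n - b := by omega
      rw [e3]
      apply Finset.sum_congr rfl
      intro t _
      have h1 : ¬ (a + t + 1 ≤ a) := by omega
      have e4 : a + t + 1 + c = b + t + 1 := by omega
      rcases Nat.eq_zero_or_pos t with rfl | htpos
      · simp only [hw', add_zero, le_refl, if_true, h1, if_false, e4]
        have e5 : a + c = b := by omega
        rw [hwab]
      · have h2 : ¬ (a + t ≤ a) := by omega
        simp only [hw', h1, h2, if_false, e4]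
        congr 2
        omega
  -- conclude
  have hmidne : Pm C c (w a) (w a) ≠ ⊤ := by
    intro htop
    apply h
    rw [htot, hsplit1]
    have : ∑ t ∈ Finset.Ico a b, C (w (t+1)) (w t) = ⊤ :=
      top_le_iff.mp (htop ▸ hmid)
    simp [this]
  refine ⟨c, w a, hc1, hcM, hmidne, ?_⟩
  calc Pm C (n-c) i j + Pm C c (w a) (w a)
      ≤ ((∑ t ∈ Finset.Ico 0 a, C (w (t+1)) (w t)) + (∑ t ∈ Finset.Ico b n, C (w (t+1)) (w t)))
        + (∑ t ∈ Finset.Ico a b, C (w (t+1)) (w t)) := add_le_add houter hmid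
    _ = Pm C n i j := by
        rw [htot, hsplit1]
        simp only [add_assoc]
        congr 1
        rw [add_comm]


variable {M : ℕ} {C : Matrix (Fin (M+1)) (Fin (M+1)) (WithTop ℚ)}

lemma exists_Lambda (hfin : ∃ i j, C i j ≠ ⊤)
    (hirr : ∀ a b : Fin (M+1), Relation.ReflTransGen (fun a b => C b a ≠ ⊤) a b) :
    ∃ Λ : ℚ,
      (∀ c (k : Fin (M+1)), 1 ≤ c → c ≤ M + 1 → Pm C c k k ≠ ⊤ →
        (((c:ℚ) * Λ : ℚ) : WithTop ℚ) ≤ Pm C c k k) ∧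
      (∃ (c : ℕ) (k : Fin (M+1)), 1 ≤ c ∧ c ≤ M + 1 ∧
        Pm C c k k = (((c:ℚ) * Λ : ℚ) : WithTop ℚ)) := by
  classical
  set S : Finset (ℕ × Fin (M+1)) :=
    (Finset.Icc 1 (M+1) ×ˢ (Finset.univ : Finset (Fin (M+1)))).filter
      (fun p => Pm C p.1 p.2 p.2 ≠ ⊤) with hS
  have hmem : ∀ p : ℕ × Fin (M+1), p ∈ S ↔ (1 ≤ p.1 ∧ p.1 ≤ M+1) ∧ Pm C p.1 p.2 p.2 ≠ ⊤ := by
    intro p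
    simp [hS, Finset.mem_filter, Finset.mem_Icc]
  have hSne : S.Nonempty := by
    obtain ⟨n, hn1, hntop⟩ := Pm_ne_top hfin hirr 0 0
    rcases le_or_gt n (M+1) with hle | hlt
    · exact ⟨(n, 0), (hmem _).mpr ⟨⟨hn1, hle⟩, hntop⟩⟩
    · obtain ⟨c, k, hc1, hcM, hck, _⟩ := Pm_split n 0 0 (by omega) hntop
      exact ⟨(c, k), (hmem _).mpr ⟨⟨hc1, hcM⟩, hck⟩⟩
  set f : ℕ × Fin (M+1) → ℚ := fun p => (Pm C p.1 p.2 p.2).untopD 0 / p.1 with hf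
  refine ⟨S.inf' hSne f, ?_, ?_⟩
  · intro c k hc1 hcM htop
    obtain ⟨q, hq⟩ := WithTop.ne_top_iff_exists.mp htop
    have hmemck : (c, k) ∈ S := (hmem _).mpr ⟨⟨hc1, hcM⟩, htop⟩
    have hinfle : S.inf' hSne f ≤ f (c, k) := Finset.inf'_le f hmemck
    rw [hf] at hinfle
    simp only [← hq, WithTop.untopD_coe] at hinfle
    rw [← hq, WithTop.coe_le_coe]
    have hcpos : (0:ℚ) < c := by exact_mod_cast hc1
    calc (c:ℚ) * S.inf' hSne f ≤ (c:ℚ) * (q / c) := by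
          exact mul_le_mul_of_nonneg_left hinfle (le_of_lt hcpos)
      _ = q := by field_simp
  · obtain ⟨p, hp, hfp⟩ := Finset.exists_mem_eq_inf' hSne f
    obtain ⟨⟨hp1, hpM⟩, hptop⟩ := (hmem p).mp hp
    obtain ⟨q, hq⟩ := WithTop.ne_top_iff_exists.mp hptop
    refine ⟨p.1, p.2, hp1, hpM, ?_⟩
    rw [← hq, WithTop.coe_inj]
    rw [hfp, hf]
    simp only [← hq, WithTop.untopD_coe]
    have hcpos : (0:ℚ) < p.1 := by exact_mod_cast hp1
    field_simp

lemma Pm_shorten (Λ : ℚ)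
    (hΛ : ∀ c (k : Fin (M+1)), 1 ≤ c → c ≤ M + 1 → Pm C c k k ≠ ⊤ →
        (((c:ℚ) * Λ : ℚ) : WithTop ℚ) ≤ Pm C c k k) :
    ∀ n, 1 ≤ n → ∀ i j : Fin (M+1), ∃ t, 1 ≤ t ∧ t ≤ n ∧ t ≤ M + 1 ∧
      Pm C t i j + (((((n:ℚ) - (t:ℚ)) * Λ : ℚ)) : WithTop ℚ) ≤ Pm C n i j := by
  intro n
  induction n using Nat.strong_induction_on with
  | _ n ih =>
    intro hn1 i j
    rcases le_or_gt n (M+1) with hle | hlt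
    · refine ⟨n, hn1, le_rfl, hle, ?_⟩
      simp
    rcases eq_or_ne (Pm C n i j) ⊤ with htop | htop
    · exact ⟨1, le_rfl, by omega, by omega, by simp [htop]⟩
    obtain ⟨c, k, hc1, hcM, hcktop, hsplit⟩ := Pm_split n i j (by omega) htop
    have hcn : c < n := by omega
    obtain ⟨t, ht1, htn, htM, hrec⟩ := ih (n - c) (by omega) (by omega) i j
    refine ⟨t, ht1, by omega, htM, ?_⟩
    have hcast : ((n - c : ℕ) : ℚ) = (n:ℚ) - (c:ℚ) := by
      push_cast [Nat.cast_sub (le_of_lt hcn)]; ring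
    rw [hcast] at hrec
    have key : ((n:ℚ) - (t:ℚ)) * Λ = ((n:ℚ) - (c:ℚ) - (t:ℚ)) * Λ + (c:ℚ) * Λ := by ring
    rw [key, WithTop.coe_add]
    calc Pm C t i j + (((((n:ℚ) - (c:ℚ) - (t:ℚ)) * Λ : ℚ) : WithTop ℚ) + (((c:ℚ) * Λ : ℚ) : WithTop ℚ))
        = (Pm C t i j + ((((n:ℚ) - (c:ℚ) - (t:ℚ)) * Λ : ℚ) : WithTop ℚ)) + (((c:ℚ) * Λ : ℚ) : WithTop ℚ) := by
          rw [add_assoc]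
      _ ≤ Pm C (n - c) i j + (((c:ℚ) * Λ : ℚ) : WithTop ℚ) := add_le_add_left hrec _
      _ ≤ Pm C (n - c) i j + Pm C c k k := add_le_add_right (hΛ c k hc1 hcM hcktop) _
      _ ≤ Pm C n i j := hsplit

end TropAux
theorem tropical_spectral_theorem' (N : ℕ)
    (C : Matrix (Fin (N + 1)) (Fin (N + 1)) (WithTop ℚ))
    (hfin : ∃ i j, C i j ≠ ⊤)
    (hirr : ∀ a b : Fin (N+1), Relation.ReflTransGen (fun a b => C b a ≠ ⊤) a b) :
    ∃ (Λ : ℚ) (V : Fin (N + 1) → ℚ), ∀ i,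
      Finset.univ.inf' Finset.univ_nonempty (fun j => C i j + (V j : WithTop ℚ)) =
        ((Λ + V i : ℚ) : WithTop ℚ) := by
  classical
  open TropAux in
  obtain ⟨Λ, hH1, l', k', hl1, hlM, hlval⟩ := TropAux.exists_Lambda hfin hirr
  set F : ℕ → Fin (N+1) → WithTop ℚ :=
    fun t i => TropAux.Pm C t i k' + ((-(t:ℚ) * Λ : ℚ) : WithTop ℚ) with hF
  have hne : (Finset.Icc 1 (N+1)).Nonempty := ⟨1, by simp⟩
  set V' : Fin (N+1) → WithTop ℚ := fun i => (Finset.Icc 1 (N+1)).inf' hne (fun t => F t i)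
    with hV'
  -- V' is finite
  have hVne : ∀ i, V' i ≠ ⊤ := by
    intro i
    obtain ⟨n, hn1, hntop⟩ := TropAux.Pm_ne_top hfin hirr i k'
    obtain ⟨t, ht1, htn, htM, hrec⟩ := TropAux.Pm_shorten Λ hH1 n hn1 i k'
    have hPt : TropAux.Pm C t i k' ≠ ⊤ :=
      TropAux.add_ne_top_left (fun htp => hntop (top_le_iff.mp (htp ▸ hrec)))
    have hFt : F t i ≠ ⊤ := WithTop.add_ne_top.mpr ⟨hPt, WithTop.coe_ne_top⟩
    exact ne_top_of_le_ne_top hFt (Finset.inf'_le _ (Finset.mem_Icc.mpr ⟨ht1, htM⟩))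
  -- V' is below F t for every t
  have hVb : ∀ (t : ℕ) (i : Fin (N+1)), V' i ≤ F t i := by
    intro t i
    rcases Nat.eq_zero_or_pos t with rfl | ht1
    · by_cases hik : i = k'
      · subst hik
        have h1 : V' i ≤ F l' i := Finset.inf'_le _ (Finset.mem_Icc.mpr ⟨hl1, hlM⟩)
        have h2 : F l' i = ((0:ℚ) : WithTop ℚ) := by
          rw [hF]; simp only [hlval, ← WithTop.coe_add]
          norm_num
        have h3 : F 0 i = ((0:ℚ) : WithTop ℚ) := by
          rw [hF]
          simp [TropAux.Pm_zero_self]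
        rw [h3, ← h2]
        exact h1
      · have : F 0 i = ⊤ := by
          rw [hF]
          have : TropAux.Pm C 0 i k' = ⊤ := by
            simp [TropAux.Pm, hik]
          simp [this]
        rw [this]; exact le_top
    rcases le_or_gt t (N+1) with htM | htM
    · exact Finset.inf'_le _ (Finset.mem_Icc.mpr ⟨ht1, htM⟩)
    · obtain ⟨t', ht'1, ht'n, ht'M, hrec⟩ := TropAux.Pm_shorten Λ hH1 t (by omega) i k'
      have step : F t' i ≤ F t i := by
        rw [hF]
        have e : (-(t':ℚ) * Λ) = (((t:ℚ) - (t':ℚ)) * Λ) + (-(t:ℚ) * Λ) := by ring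
        calc TropAux.Pm C t' i k' + ((-(t':ℚ) * Λ : ℚ) : WithTop ℚ)
            = (TropAux.Pm C t' i k' + ((((t:ℚ) - (t':ℚ)) * Λ : ℚ) : WithTop ℚ))
              + ((-(t:ℚ) * Λ : ℚ) : WithTop ℚ) := by
              rw [add_assoc, ← WithTop.coe_add, ← e]
          _ ≤ TropAux.Pm C t i k' + ((-(t:ℚ) * Λ : ℚ) : WithTop ℚ) :=
              add_le_add_left hrec _
      exact le_trans (Finset.inf'_le _ (Finset.mem_Icc.mpr ⟨ht'1, ht'M⟩)) step
  -- the eigen-equation at the level of V'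
  have hEq : ∀ i, Finset.univ.inf' Finset.univ_nonempty (fun j => C i j + V' j)
      = V' i + (Λ : WithTop ℚ) := by
    intro i
    apply le_antisymm
    · -- upper bound
      obtain ⟨t₀, ht₀, hFt₀⟩ := Finset.exists_mem_eq_inf' hne (fun t => F t i)
      rw [Finset.mem_Icc] at ht₀
      obtain ⟨s, rfl⟩ : ∃ s, t₀ = s + 1 := ⟨t₀ - 1, by omega⟩
      obtain ⟨j₀, hj₀⟩ := TropAux.Pm_succ_exists (C := C) s i k'
      have h1 : Finset.univ.inf' Finset.univ_nonempty (fun j => C i j + V' j)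
          ≤ C i j₀ + V' j₀ := Finset.inf'_le _ (Finset.mem_univ j₀)
      have h2 : C i j₀ + V' j₀ ≤ C i j₀ + F s j₀ := add_le_add_right (hVb s j₀) _
      have hVi : V' i = F (s+1) i := hFt₀
      have h3 : C i j₀ + F s j₀ = V' i + (Λ : WithTop ℚ) := by
        rw [hVi]
        simp only [hF]
        rw [hj₀]
        rw [add_assoc, add_assoc, ← WithTop.coe_add]
        congr 3
        push_cast
        ring
      exact le_trans h1 (le_of_le_of_eq h2 h3)
    · -- lower bound
      apply Finset.le_inf'
      intro j _
      obtain ⟨t₁, ht₁, hFt₁⟩ := Finset.exists_mem_eq_inf' hne (fun t => F t j)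
      rw [Finset.mem_Icc] at ht₁
      have hVj : V' j = F t₁ j := hFt₁
      rw [hVj]
      have h4 : V' i + (Λ : WithTop ℚ) ≤ F (t₁ + 1) i + (Λ : WithTop ℚ) :=
        add_le_add_left (hVb (t₁+1) i) _
      refine h4.trans ?_
      rw [hF]
      have h5 : TropAux.Pm C (t₁+1) i k' ≤ C i j + TropAux.Pm C t₁ j k' :=
        TropAux.Pm_succ_le t₁ i k' j
      calc TropAux.Pm C (t₁+1) i k' + ((-((t₁+1:ℕ):ℚ) * Λ : ℚ) : WithTop ℚ) + (Λ : WithTop ℚ)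
          = TropAux.Pm C (t₁+1) i k' + ((-(t₁:ℚ) * Λ : ℚ) : WithTop ℚ) := by
            rw [add_assoc, ← WithTop.coe_add]
            congr 2
            push_cast
            ring
        _ ≤ (C i j + TropAux.Pm C t₁ j k') + ((-(t₁:ℚ) * Λ : ℚ) : WithTop ℚ) :=
            add_le_add_left h5 _
        _ = C i j + (TropAux.Pm C t₁ j k' + ((-(t₁:ℚ) * Λ : ℚ) : WithTop ℚ)) := by
            rw [add_assoc]
  -- extract rational values
  set Vq : Fin (N+1) → ℚ := fun i => (V' i).untopD 0 with hVq
  have hVcoe : ∀ i, ((Vq i : ℚ) : WithTop ℚ) = V' i := by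
    intro i
    obtain ⟨q, hq⟩ := WithTop.ne_top_iff_exists.mp (hVne i)
    rw [hVq]; simp [← hq]
  refine ⟨Λ, Vq, fun i => ?_⟩
  simp only [hVcoe]
  rw [hEq i, ← hVcoe i, ← WithTop.coe_add, WithTop.coe_inj]
  ring

/-- Irreducibility of a tropical (min-plus) matrix: the adjacency digraph, which has
an arc `j → i` whenever `C i j ≠ ⊤`, is strongly connected. -/
def TropIrreducible {N : ℕ} (C : Matrix (Fin N) (Fin N) (WithTop ℚ)) : Prop :=
  ∀ i j : Fin N, Relation.ReflTransGen (fun a b => C b a ≠ ⊤) i j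

/-- min-plus spectral theorem, Proposition 3.6.
An irreducible tropical matrix with at least one finite entry has a rational
tropical eigenvalue `Λ` with an eigenvector `V ∈ ℚ^N`:
`min_j (C_{ij} + V_j) = Λ + V_i` for every `i`. -/
theorem tropical_spectral_theorem (N : ℕ)
    (C : Matrix (Fin (N + 1)) (Fin (N + 1)) (WithTop ℚ))
    (hfin : ∃ i j, C i j ≠ ⊤) (hirr : TropIrreducible C) :
    ∃ (Λ : ℚ) (V : Fin (N + 1) → ℚ), ∀ i,
      Finset.univ.inf' Finset.univ_nonempty (fun j => C i j + (V j : WithTop ℚ)) =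
        ((Λ + V i : ℚ) : WithTop ℚ) := by
  exact tropical_spectral_theorem' N C hfin hirr
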